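/- For fixed z ∈ ℂ, define the operator U_z on smooth functions f : ℝ → ℂ by (U_z f)(x) = conj(z) f'(x) − z x f(x). Let F : ℂ → ℂ be an entire function and let f = F|_ℝ be its restriction to the real line. Then the series ∑_{n=0}^∞ (1/n!) (U_zⁿ f)(0) converges and its sum equals e^{−|z|²/2} F(conj z). -/

import Mathlib

open Filter ComplexConjugate

/-- The operator `U_z f = conj z f'(x) − z x f(x)`. -/
noncomputable def Uz (z : ℂ) (f : ℝ → ℂ) : ℝ → ℂ :=
  fun x => conj z * deriv f x - z * (x : ℂ) * f x

theorem displacement_series_on_entire_restriction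
    (z : ℂ) (F : ℂ → ℂ) (hF : Differentiable ℂ F) (f : ℝ → ℂ)
    (hf : ∀ x : ℝ, f x = F x) :
    Tendsto (fun N : ℕ => ∑ n ∈ Finset.range N,
        (1 / (n.factorial : ℂ)) * ((Uz z)^[n] f) 0)
      atTop (nhds (Complex.exp (-(‖z‖ : ℂ) ^ 2 / 2) * F (conj z))) := by
  rcases eq_or_ne z 0 with hz | hz
  · subst hz
    have h0 : ∀ g : ℝ → ℂ, Uz 0 g = fun _ => 0 := by
      intro g; funext x; simp [Uz]
    have hterm : ∀ n : ℕ, (1 / (n.factorial : ℂ)) * ((Uz 0)^[n] f) 0 =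
        if n = 0 then f 0 else 0 := by
      intro n
      cases n with
      | zero => simp
      | succ m =>
        rw [Function.iterate_succ_apply', h0]
        simp
    have hsum : ∀ N : ℕ, 1 ≤ N → (∑ n ∈ Finset.range N,
        (1 / (n.factorial : ℂ)) * ((Uz 0)^[n] f) 0) = f 0 := by
      intro N hN
      rw [Finset.sum_congr rfl (fun n _ => hterm n)]
      rw [Finset.sum_ite_eq' (Finset.range N) 0 (fun _ => f 0)]
      simp [Finset.mem_range, Nat.lt_of_lt_of_le Nat.zero_lt_one hN]
    have : Tendsto (fun _ : ℕ => f 0) atTop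
        (nhds (Complex.exp (-(‖(0 : ℂ)‖ : ℂ) ^ 2 / 2) * F (conj (0 : ℂ)))) := by
      have heq : Complex.exp (-(‖(0 : ℂ)‖ : ℂ) ^ 2 / 2) * F (conj (0 : ℂ)) = f 0 := by
        simp [hf 0]
      rw [heq]
      exact tendsto_const_nhds
    refine this.congr' ?_
    filter_upwards [eventually_ge_atTop 1] with N hN
    exact (hsum N hN).symm
  · have hcz : (conj z : ℂ) ≠ 0 := by
      simpa using hz
    set a : ℂ := z / (2 * conj z) with ha
    set K : ℂ → ℂ := fun w => Complex.exp (-(a * w ^ 2)) * F w with hKdef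
    have hK : Differentiable ℂ K := by
      exact (Complex.differentiable_exp.comp (by fun_prop)).mul hF
    have hKn : ∀ n : ℕ, Differentiable ℂ (iteratedDeriv n K) := by
      intro n
      exact hK.contDiff.differentiable_iteratedDeriv n
        (by exact_mod_cast WithTop.coe_lt_top (n : ℕ∞))
    -- the auxiliary entire functions
    set E : ℕ → ℂ → ℂ := fun n w =>
      Complex.exp (a * w ^ 2) * ((conj z) ^ n * iteratedDeriv n K w) with hEdef
    have hEderiv : ∀ (n : ℕ) (x : ℝ), HasDerivAt (fun y : ℝ => E n (y : ℂ))
        (Complex.exp (a * (x : ℂ) ^ 2) * (a * (2 * (x : ℂ))) *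
          ((conj z) ^ n * iteratedDeriv n K x) +
         Complex.exp (a * (x : ℂ) ^ 2) * ((conj z) ^ n * iteratedDeriv (n + 1) K x)) x := by
      intro n x
      have h1 : HasDerivAt (fun w : ℂ => Complex.exp (a * w ^ 2))
          (Complex.exp (a * (x : ℂ) ^ 2) * (a * (2 * (x : ℂ)))) (x : ℂ) := by
        have hp : HasDerivAt (fun w : ℂ => a * w ^ 2) (a * (2 * (x : ℂ))) (x : ℂ) := by
          simpa using ((hasDerivAt_pow 2 (x : ℂ)).const_mul a)
        simpa [mul_comm] using hp.cexp
      have h2 : HasDerivAt (fun w : ℂ => (conj z) ^ n * iteratedDeriv n K w)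
          ((conj z) ^ n * iteratedDeriv (n + 1) K x) (x : ℂ) := by
        have := ((hKn n) (x : ℂ)).hasDerivAt
        have h := this.const_mul ((conj z) ^ n)
        rwa [iteratedDeriv_succ]
      exact (h1.mul h2).comp_ofReal
    have key : ∀ (n : ℕ) (x : ℝ), ((Uz z)^[n] f) x = E n x := by
      intro n
      induction n with
      | zero =>
        intro x
        simp only [Function.iterate_zero_apply, hEdef, pow_zero, one_mul, iteratedDeriv_zero,
          hKdef]
        rw [hf x, ← mul_assoc, ← Complex.exp_add]
        simp
      | succ n ih =>
        intro x
        rw [Function.iterate_succ_apply']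
        have hfun : (Uz z)^[n] f = fun y : ℝ => E n (y : ℂ) := funext ih
        simp only [Uz, hfun]
        rw [(hEderiv n x).deriv]
        simp only [hEdef]
        have hza : conj z * (2 * a) = z := by
          rw [ha]; field_simp
        linear_combination ((x : ℂ) * Complex.exp (a * (x : ℂ) ^ 2) * (conj z) ^ n *
          iteratedDeriv n K (x : ℂ)) * hza
    -- Taylor series of K at 0 evaluated at conj z
    have hTS := Complex.hasSum_taylorSeries_of_entire hK 0 (conj z)
    have hterm : ∀ n : ℕ, (1 / (n.factorial : ℂ)) * ((Uz z)^[n] f) 0 =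
        (n.factorial : ℂ)⁻¹ • (conj z - 0) ^ n • iteratedDeriv n K 0 := by
      intro n
      rw [key n 0]
      simp [hEdef, smul_eq_mul]
      try ring
    have hKval : K (conj z) = Complex.exp (-(‖z‖ : ℂ) ^ 2 / 2) * F (conj z) := by
      simp only [hKdef]
      congr 1
      have : a * (conj z) ^ 2 = z * conj z / 2 := by
        rw [ha, div_mul_eq_mul_div, div_eq_div_iff (mul_ne_zero two_ne_zero hcz) two_ne_zero]
        ring
      rw [this, Complex.mul_conj]
      rw [Complex.normSq_eq_norm_sq]
      push_cast
      ring_nf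
    have := hTS.tendsto_sum_nat
    rw [hKval] at this
    refine this.congr ?_
    intro N
    exact Finset.sum_congr rfl (fun n _ => (hterm n).symm)
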